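/- The one-dimensional tile T = {1, 2, 4, 5} ⊂ ℤ (i.e. the pattern XX.XX) tiles ℤ²: there is a partition of ℤ² into translates of T placed in the horizontal or vertical direction. -/
import Mathlib

/-- A horizontal or vertical copy of the tile `T ⊆ ℤ` in `ℤ²`. -/
def IsCopy2 (T : Set ℤ) (S : Set (ℤ × ℤ)) : Prop :=
  ∃ a b : ℤ,
    S = {p : ℤ × ℤ | ∃ t ∈ T, p = (a + t, b)} ∨
    S = {p : ℤ × ℤ | ∃ t ∈ T, p = (a, b + t)}

def offTable : List (List (Bool × Fin 6)) := [
  [(false, 5), (true, 4), (false, 1), (false, 2), (true, 4), (false, 4)],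
  [(true, 1), (true, 5), (true, 4), (true, 1), (true, 5), (true, 4)],
  [(true, 2), (true, 1), (true, 5), (true, 2), (true, 1), (true, 5)],
  [(false, 5), (true, 2), (false, 1), (false, 2), (true, 2), (false, 4)],
  [(true, 4), (false, 1), (false, 2), (true, 4), (false, 4), (false, 5)],
  [(true, 5), (true, 4), (true, 1), (true, 5), (true, 4), (true, 1)],
  [(true, 1), (true, 5), (true, 2), (true, 1), (true, 5), (true, 2)],
  [(true, 2), (false, 1), (false, 2), (true, 2), (false, 4), (false, 5)],
  [(false, 4), (false, 5), (true, 4), (false, 1), (false, 2), (true, 4)],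
  [(true, 4), (true, 1), (true, 5), (true, 4), (true, 1), (true, 5)],
  [(true, 5), (true, 2), (true, 1), (true, 5), (true, 2), (true, 1)],
  [(false, 4), (false, 5), (true, 2), (false, 1), (false, 2), (true, 2)]]

def off (i : ZMod 12) (j : ZMod 6) : Bool × Fin 6 :=
  (offTable.getD i.val []).getD j.val (true, 1)

def mytile : Bool × ℤ × ℤ → Set (ℤ × ℤ)
  | (true, a, b) => {p : ℤ × ℤ | ∃ t ∈ ({1, 2, 4, 5} : Set ℤ), p = (a + t, b)}
  | (false, a, b) => {p : ℤ × ℤ | ∃ t ∈ ({1, 2, 4, 5} : Set ℤ), p = (a, b + t)}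

def tileOf (p : ℤ × ℤ) : Bool × ℤ × ℤ :=
  let o := off (p.1 : ZMod 12) (p.2 : ZMod 6)
  if o.1 then (true, p.1 - (o.2.val : ℤ), p.2) else (false, p.1, p.2 - (o.2.val : ℤ))

lemma off_mem (i : ZMod 12) (j : ZMod 6) :
    (off i j).2 = 1 ∨ (off i j).2 = 2 ∨ (off i j).2 = 4 ∨ (off i j).2 = 5 := by
  revert i j; decide

lemma key (i : ZMod 12) (j : ZMod 6) (t : Fin 6)
    (ht : t = 1 ∨ t = 2 ∨ t = 4 ∨ t = 5) :
    ((off i j).1 = true →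
      off (i - ((off i j).2.val : ZMod 12) + (t.val : ZMod 12)) j = (true, t)) ∧
    ((off i j).1 = false →
      off i (j - ((off i j).2.val : ZMod 6) + (t.val : ZMod 6)) = (false, t)) := by
  revert ht; revert i j t; decide

lemma tileOf_true (p : ℤ × ℤ) (hb : (off (p.1 : ZMod 12) (p.2 : ZMod 6)).1 = true) :
    tileOf p = (true, p.1 - (((off (p.1 : ZMod 12) (p.2 : ZMod 6)).2.val : ℤ)), p.2) := by
  simp [tileOf, hb]

lemma tileOf_false (p : ℤ × ℤ) (hb : (off (p.1 : ZMod 12) (p.2 : ZMod 6)).1 = false) :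
    tileOf p = (false, p.1, p.2 - (((off (p.1 : ZMod 12) (p.2 : ZMod 6)).2.val : ℤ))) := by
  simp [tileOf, hb]

lemma horiz_case (p : ℤ × ℤ) (hb : (off (p.1 : ZMod 12) (p.2 : ZMod 6)).1 = true)
    (t : Fin 6) (ht : t = 1 ∨ t = 2 ∨ t = 4 ∨ t = 5) :
    tileOf (p.1 - (((off (p.1 : ZMod 12) (p.2 : ZMod 6)).2.val : ℤ)) + (t.val : ℤ), p.2)
      = tileOf p := by
  have hk := (key (p.1 : ZMod 12) (p.2 : ZMod 6) t ht).1 hb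
  rw [tileOf_true p hb]
  have hcast : ((p.1 - (((off (p.1 : ZMod 12) (p.2 : ZMod 6)).2.val : ℤ)) + (t.val : ℤ) : ℤ)
        : ZMod 12)
      = (p.1 : ZMod 12) - ((off (p.1 : ZMod 12) (p.2 : ZMod 6)).2.val : ZMod 12)
        + (t.val : ZMod 12) := by
    push_cast; ring
  rw [tileOf_true _ (by simp [hcast, hk])]
  simp only [hcast, hk]
  refine Prod.ext rfl (Prod.ext ?_ rfl)
  ring

lemma vert_case (p : ℤ × ℤ) (hb : (off (p.1 : ZMod 12) (p.2 : ZMod 6)).1 = false)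
    (t : Fin 6) (ht : t = 1 ∨ t = 2 ∨ t = 4 ∨ t = 5) :
    tileOf (p.1, p.2 - (((off (p.1 : ZMod 12) (p.2 : ZMod 6)).2.val : ℤ)) + (t.val : ℤ))
      = tileOf p := by
  have hk := (key (p.1 : ZMod 12) (p.2 : ZMod 6) t ht).2 hb
  rw [tileOf_false p hb]
  have hcast : ((p.2 - (((off (p.1 : ZMod 12) (p.2 : ZMod 6)).2.val : ℤ)) + (t.val : ℤ) : ℤ)
        : ZMod 6)
      = (p.2 : ZMod 6) - ((off (p.1 : ZMod 12) (p.2 : ZMod 6)).2.val : ZMod 6)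
        + (t.val : ZMod 6) := by
    push_cast; ring
  rw [tileOf_false _ (by simp [hcast, hk])]
  simp only [hcast, hk]
  refine Prod.ext rfl (Prod.ext rfl ?_)
  ring

lemma self_mem (p : ℤ × ℤ) : p ∈ mytile (tileOf p) := by
  rcases hb : (off (p.1 : ZMod 12) (p.2 : ZMod 6)).1 with _ | _
  · rw [tileOf_false p hb]
    refine ⟨((off (p.1 : ZMod 12) (p.2 : ZMod 6)).2.val : ℤ), ?_, ?_⟩
    · simp only [Set.mem_insert_iff, Set.mem_singleton_iff]
      rcases off_mem (p.1 : ZMod 12) (p.2 : ZMod 6) with h | h | h | h <;>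
        rw [h] <;> decide
    · simp [Prod.ext_iff]
  · rw [tileOf_true p hb]
    refine ⟨((off (p.1 : ZMod 12) (p.2 : ZMod 6)).2.val : ℤ), ?_, ?_⟩
    · simp only [Set.mem_insert_iff, Set.mem_singleton_iff]
      rcases off_mem (p.1 : ZMod 12) (p.2 : ZMod 6) with h | h | h | h <;>
        rw [h] <;> decide
    · simp [Prod.ext_iff]

lemma consistent (p q : ℤ × ℤ) (hq : q ∈ mytile (tileOf p)) : tileOf q = tileOf p := by
  rcases hb : (off (p.1 : ZMod 12) (p.2 : ZMod 6)).1 with _ | _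
  · rw [tileOf_false p hb] at hq
    obtain ⟨t, ht, rfl⟩ := hq
    rcases ht with rfl | rfl | rfl | rfl
    · exact vert_case p hb 1 (by decide)
    · exact vert_case p hb 2 (by decide)
    · exact vert_case p hb 4 (by decide)
    · exact vert_case p hb 5 (by decide)
  · rw [tileOf_true p hb] at hq
    obtain ⟨t, ht, rfl⟩ := hq
    rcases ht with rfl | rfl | rfl | rfl
    · exact horiz_case p hb 1 (by decide)
    · exact horiz_case p hb 2 (by decide)
    · exact horiz_case p hb 4 (by decide)
    · exact horiz_case p hb 5 (by decide)

/-- the tile `XX.XX`, i.e. `T = {1,2,4,5} ⊆ ℤ`, tiles `ℤ²`. -/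
theorem xxdotxx_tiles_Z2 :
    ∃ P : Set (Set (ℤ × ℤ)),
      (∀ S ∈ P, IsCopy2 ({1, 2, 4, 5} : Set ℤ) S) ∧
      P.PairwiseDisjoint id ∧ ⋃₀ P = Set.univ := by
  refine ⟨Set.range (fun p => mytile (tileOf p)), ?_, ?_, ?_⟩
  · rintro S ⟨p, rfl⟩
    rcases h : tileOf p with ⟨o, a, b⟩
    cases o
    · exact ⟨a, b, Or.inr (by show mytile (tileOf p) = _; rw [h]; rfl)⟩
    · exact ⟨a, b, Or.inl (by show mytile (tileOf p) = _; rw [h]; rfl)⟩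
  · rintro S ⟨p, rfl⟩ S' ⟨p', rfl⟩ hne
    simp only [Function.onFun, id]
    rw [Set.disjoint_left]
    intro x hx hx'
    exact hne (show mytile (tileOf p) = mytile (tileOf p') by
      rw [← consistent p x hx, ← consistent p' x hx'])
  · ext p
    simp only [Set.mem_sUnion, Set.mem_univ, iff_true]
    exact ⟨mytile (tileOf p), ⟨p, rfl⟩, self_mem p⟩
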